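/- In the group algebra C[S_n], the element Q = Σ_{T ⊆ {1,…,n}} (−1)^{|T|} I(Sym({1,…,n}\T)) · ∏_{i=1}^k I(Sym(A_i ∩ T)) equals Σ_{π ∈ S_n} c(π)·π, where c(π) = 0 if π has an odd-length small cycle and c(π) = 2^m otherwise, m being the number of small cycles of π. -/

import Mathlib

/-- Apply a permutation of `Fin n` to a natural number (0-based indexing);
indices `≥ n` are left fixed. -/
def appl {n : ℕ} (π : Equiv.Perm (Fin n)) (j : ℕ) : ℕ :=
  if h : j < n then ((π ⟨j, h⟩ : Fin n) : ℕ) else j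

/-- The starting index (0-based) of the `i`-th consecutive block when
`{0,…,n-1}` is partitioned into blocks of sizes `a 0, …, a (k-1)`. -/
def blockStart {k : ℕ} (a : Fin k → ℕ) (i : Fin k) : ℕ := ∑ t ∈ Finset.Iio i, a t

/-- `x` lies in the `i`-th block. -/
def inBlock {k : ℕ} (a : Fin k → ℕ) (i : Fin k) (x : ℕ) : Prop :=
  blockStart a i ≤ x ∧ x < blockStart a i + a i

instance {k : ℕ} (a : Fin k → ℕ) (i : Fin k) : DecidablePred (inBlock a i) := fun x =>
  inferInstanceAs (Decidable (blockStart a i ≤ x ∧ x < blockStart a i + a i))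

/-- An `(a₁,…,a_k,S)`-permutation: a permutation of `{0,…,n-1}` (where `n = ∑ aᵢ`)
that is strictly decreasing on each block `Aᵢ` with `i ∈ S` and strictly
increasing on each block `Aᵢ` with `i ∉ S`. -/
def IsASPerm {k : ℕ} (a : Fin k → ℕ) (S : Finset (Fin k))
    (π : Equiv.Perm (Fin (∑ t, a t))) : Prop :=
  ∀ i : Fin k, ∀ j : ℕ, blockStart a i ≤ j → j + 1 < blockStart a i + a i →
    if i ∈ S then appl π (j + 1) < appl π j else appl π j < appl π (j + 1)

/-- The `i`-th block as a finset of `Fin n`. -/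
def blockFin {k : ℕ} (a : Fin k → ℕ) (i : Fin k) : Finset (Fin (∑ t, a t)) :=
  Finset.univ.filter (fun x => inBlock a i (x : ℕ))

/-- The small cycles of `π` of length `≥ 2`: cycle factors whose support lies
entirely within a single block. (Fixed points, i.e. small `1`-cycles, are
treated separately.) -/
def smallCycles {k : ℕ} (a : Fin k → ℕ) (π : Equiv.Perm (Fin (∑ t, a t))) :
    Finset (Equiv.Perm (Fin (∑ t, a t))) :=
  π.cycleFactorsFinset.filter (fun c => ∃ i, ∀ x ∈ c.support, inBlock a i (x : ℕ))

/-- `c(π)`: zero if `π` has an odd-length small cycle (in particular, a fixed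
point), and `2^m` otherwise, where `m` is the number of small cycles of `π`. -/
def cWeight {k : ℕ} (a : Fin k → ℕ) (π : Equiv.Perm (Fin (∑ t, a t))) : ℕ :=
  if (∃ x, π x = x) ∨ ∃ c ∈ smallCycles a π, Odd c.support.card then 0
  else 2 ^ (smallCycles a π).card

/-- `I(T) = ∑_{π ∈ T} π` for the naturally embedded `Sym(X) ⊆ S_n`, as an
element of the group algebra `ℂ[S_n]`. -/
noncomputable def symAlg {n : ℕ} (X : Finset (Fin n)) :
    MonoidAlgebra ℂ (Equiv.Perm (Fin n)) :=
  ∑ π ∈ Finset.univ.filter (fun π : Equiv.Perm (Fin n) => ∀ x ∉ X, π x = x),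
    MonoidAlgebra.single π 1


open Finset Equiv

section Blocks
variable {k : ℕ} (a : Fin k → ℕ)

lemma blockStart_add_le {i j : Fin k} (h : i < j) : blockStart a i + a i ≤ blockStart a j := by
  have h1 : insert i (Finset.Iio i) ⊆ Finset.Iio j := by
    intro t ht
    rcases Finset.mem_insert.mp ht with rfl | ht
    · exact Finset.mem_Iio.mpr h
    · exact Finset.mem_Iio.mpr (lt_trans (Finset.mem_Iio.mp ht) h)
  calc blockStart a i + a i = ∑ t ∈ insert i (Finset.Iio i), a t := by
        rw [Finset.sum_insert (by simp), add_comm]; rfl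
    _ ≤ blockStart a j := Finset.sum_le_sum_of_subset h1

lemma block_unique {i j : Fin k} {x : ℕ} (hi : inBlock a i x) (hj : inBlock a j x) : i = j := by
  by_contra hne
  rcases lt_or_gt_of_ne hne with h | h
  · exact absurd (lt_of_lt_of_le (lt_of_lt_of_le hi.2 (blockStart_add_le a h)) hj.1) (lt_irrefl x)
  · exact absurd (lt_of_lt_of_le (lt_of_lt_of_le hj.2 (blockStart_add_le a h)) hi.1) (lt_irrefl x)

lemma block_exists (x : Fin (∑ t, a t)) : ∃ i, inBlock a i (x : ℕ) := by
  rcases Nat.eq_zero_or_pos k with rfl | hk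
  · exact absurd x.2 (by simp)
  have hzero : blockStart a ⟨0, hk⟩ = 0 := by
    have : Finset.Iio (⟨0, hk⟩ : Fin k) = ∅ := by
      ext t; simp [Fin.lt_def]
    rw [blockStart, this, Finset.sum_empty]
  set s := Finset.univ.filter (fun i : Fin k => blockStart a i ≤ (x : ℕ)) with hs
  have hne : s.Nonempty := ⟨⟨0, hk⟩, by simp [hs, hzero]⟩
  set i := s.max' hne with hi
  have his : i ∈ s := s.max'_mem hne
  have hle : blockStart a i ≤ (x : ℕ) := (Finset.mem_filter.mp his).2
  refine ⟨i, hle, ?_⟩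
  by_contra hlt
  push_neg at hlt
  by_cases hik : (i : ℕ) + 1 < k
  · have hstep : blockStart a ⟨(i : ℕ) + 1, hik⟩ = blockStart a i + a i := by
      have : Finset.Iio (⟨(i : ℕ) + 1, hik⟩ : Fin k) = insert i (Finset.Iio i) := by
        ext t; simp [Fin.lt_def, Fin.ext_iff] <;> omega
      rw [blockStart, this, Finset.sum_insert (by simp), add_comm]; rfl
    have hmem : (⟨(i : ℕ) + 1, hik⟩ : Fin k) ∈ s := by
      simp only [hs, Finset.mem_filter, Finset.mem_univ, true_and]
      omega
    have := s.le_max' _ hmem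
    rw [← hi] at this
    simp [Fin.le_def] at this
  · have hlast : (i : ℕ) + 1 = k := by omega
    have huniv : (Finset.univ : Finset (Fin k)) = insert i (Finset.Iio i) := by
      ext t
      simp only [Finset.mem_univ, true_iff, Finset.mem_insert, Finset.mem_Iio, Fin.lt_def,
        Fin.ext_iff]
      omega
    have : (∑ t, a t) = blockStart a i + a i := by
      rw [huniv, Finset.sum_insert (by simp), add_comm]; rfl
    omega

lemma inBlock_of_mem_blockFin {i : Fin k} {x : Fin (∑ t, a t)} (h : x ∈ blockFin a i) :
    inBlock a i (x : ℕ) := (Finset.mem_filter.mp h).2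

lemma mem_blockFin_of_inBlock {i : Fin k} {x : Fin (∑ t, a t)} (h : inBlock a i (x : ℕ)) :
    x ∈ blockFin a i := Finset.mem_filter.mpr ⟨Finset.mem_univ _, h⟩

end Blocks
section Restr
variable {n : ℕ}

/-- Restriction of a permutation to an invariant finset, extended by the identity. -/
def permRestr (X : Finset (Fin n)) (ρ : Equiv.Perm (Fin n)) : Equiv.Perm (Fin n) :=
  if h : ∀ x, x ∈ X ↔ ρ x ∈ X then Equiv.Perm.ofSubtype (ρ.subtypePerm (fun x => (h x).symm)) else 1

lemma maps_iff_of_maps {X : Finset (Fin n)} {ρ : Equiv.Perm (Fin n)}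
    (h : ∀ x ∈ X, ρ x ∈ X) : ∀ x, x ∈ X ↔ ρ x ∈ X := by
  have himg : X.image ρ = X := by
    apply Finset.eq_of_subset_of_card_le
    · intro y hy
      rcases Finset.mem_image.mp hy with ⟨x, hx, rfl⟩
      exact h x hx
    · rw [Finset.card_image_of_injective _ ρ.injective]
  intro x
  refine ⟨h x, fun hx => ?_⟩
  rw [← himg] at hx
  rcases Finset.mem_image.mp hx with ⟨y, hy, hyx⟩
  rwa [← ρ.injective hyx]

lemma permRestr_apply_mem {X : Finset (Fin n)} {ρ : Equiv.Perm (Fin n)}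
    (h : ∀ x ∈ X, ρ x ∈ X) {x : Fin n} (hx : x ∈ X) : permRestr X ρ x = ρ x := by
  rw [permRestr, dif_pos (maps_iff_of_maps h)]
  rw [Equiv.Perm.ofSubtype_apply_of_mem _ hx]
  rfl

lemma permRestr_apply_not_mem {X : Finset (Fin n)} {ρ : Equiv.Perm (Fin n)}
    (h : ∀ x ∈ X, ρ x ∈ X) {x : Fin n} (hx : x ∉ X) : permRestr X ρ x = x := by
  rw [permRestr, dif_pos (maps_iff_of_maps h)]
  rw [Equiv.Perm.ofSubtype_apply_of_not_mem _ hx]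

lemma perm_fix_of_fix_inv {ρ : Equiv.Perm (Fin n)} {x : Fin n} (h : ρ x = x) : ρ⁻¹ x = x := by
  conv_lhs => rw [← h]
  exact ρ.symm_apply_apply x

lemma perm_maps_of_fix_outside {X : Finset (Fin n)} {σ : Equiv.Perm (Fin n)}
    (h : ∀ x ∉ X, σ x = x) : ∀ x ∈ X, σ x ∈ X := by
  intro x hx
  by_contra hσx
  have := h _ hσx
  rw [σ.injective this] at hσx
  exact hσx hx

end Restr

/-- Multiplicity-free convolution of indicator sums in the group algebra. -/
lemma conv {G : Type*} [Group G] [DecidableEq G] (A B C : Finset G) (r : G → G)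
    (h1 : ∀ ρ ∈ C, r ρ ∈ A ∧ (r ρ)⁻¹ * ρ ∈ B)
    (h2 : ∀ σ ∈ A, ∀ τ ∈ B, σ * τ ∈ C ∧ r (σ * τ) = σ) :
    ((∑ σ ∈ A, MonoidAlgebra.single σ (1 : ℂ)) * ∑ τ ∈ B, MonoidAlgebra.single τ (1 : ℂ))
      = ∑ ρ ∈ C, MonoidAlgebra.single ρ (1 : ℂ) := by
  rw [Finset.sum_mul_sum]
  have hsingle : ∀ σ τ : G, (MonoidAlgebra.single σ (1 : ℂ)) * MonoidAlgebra.single τ 1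
      = MonoidAlgebra.single (σ * τ) 1 := by
    intro σ τ; rw [MonoidAlgebra.single_mul_single, one_mul]
  simp_rw [hsingle]
  rw [← Finset.sum_product']
  exact Finset.sum_nbij' (fun p => p.1 * p.2) (fun ρ => (r ρ, (r ρ)⁻¹ * ρ))
    (fun p hp => by
      rcases Finset.mem_product.mp hp with ⟨h1', h2'⟩
      exact (h2 _ h1' _ h2').1)
    (fun ρ hρ => Finset.mem_product.mpr ⟨(h1 ρ hρ).1, (h1 ρ hρ).2⟩)
    (fun p hp => by
      rcases Finset.mem_product.mp hp with ⟨h1', h2'⟩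
      have := (h2 _ h1' _ h2').2
      ext <;> simp [this]
      )
    (fun ρ hρ => by group)
    (fun p hp => rfl)
section ProdSym
variable {k : ℕ} (a : Fin k → ℕ)

/-- Predicate for membership in the expansion of a product of `symAlg`s of blocks. -/
def Pl (T : Finset (Fin (∑ t, a t))) (l : List (Fin k)) (σ : Equiv.Perm (Fin (∑ t, a t))) :
    Prop :=
  (∀ x, (∀ i ∈ l, x ∉ blockFin a i ∩ T) → σ x = x) ∧
  ∀ i ∈ l, ∀ x ∈ blockFin a i ∩ T, σ x ∈ blockFin a i ∩ T

instance (T : Finset (Fin (∑ t, a t))) (l : List (Fin k)) : DecidablePred (Pl a T l) :=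
  fun σ => by unfold Pl; infer_instance

lemma list_prod_symAlg (T : Finset (Fin (∑ t, a t))) (l : List (Fin k)) (hl : l.Nodup) :
    (l.map (fun i => symAlg (blockFin a i ∩ T))).prod
      = ∑ σ ∈ Finset.univ.filter (Pl a T l), MonoidAlgebra.single σ (1 : ℂ) := by
  induction l with
  | nil =>
    simp only [List.map_nil, List.prod_nil]
    have h : Finset.univ.filter (Pl a T ([] : List (Fin k))) = {1} := by
      ext σ
      simp only [Finset.mem_filter, Finset.mem_univ, true_and, Finset.mem_singleton, Pl]
      constructor
      · rintro ⟨h1, -⟩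
        exact Equiv.ext fun x => h1 x (by simp)
      · rintro rfl
        exact ⟨fun x _ => rfl, by simp⟩
    rw [h, Finset.sum_singleton, MonoidAlgebra.one_def]
  | cons i l ih =>
    have hil : i ∉ l := (List.nodup_cons.mp hl).1
    have hl' : l.Nodup := (List.nodup_cons.mp hl).2
    have hdisj : ∀ j ∈ l, ∀ x : Fin (∑ t, a t),
        x ∈ blockFin a i ∩ T → x ∉ blockFin a j ∩ T := by
      intro j hj x hx hx'
      have h1 := inBlock_of_mem_blockFin a (Finset.mem_inter.mp hx).1
      have h2 := inBlock_of_mem_blockFin a (Finset.mem_inter.mp hx').1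
      exact hil (block_unique a h1 h2 ▸ hj)
    rw [List.map_cons, List.prod_cons, ih hl', symAlg]
    apply conv _ _ _ (fun ρ => permRestr (blockFin a i ∩ T) ρ)
    · -- h1
      intro ρ hρ
      obtain ⟨hfix, hblk⟩ := (Finset.mem_filter.mp hρ).2
      have hpres : ∀ x ∈ blockFin a i ∩ T, ρ x ∈ blockFin a i ∩ T :=
        hblk i (List.mem_cons_self)
      constructor
      · refine Finset.mem_filter.mpr ⟨Finset.mem_univ _, fun x hx => ?_⟩
        exact permRestr_apply_not_mem hpres hx
      · refine Finset.mem_filter.mpr ⟨Finset.mem_univ _, ?_, ?_⟩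
        · intro x hx
          by_cases hxB : x ∈ blockFin a i ∩ T
          · have hρx : ρ x ∈ blockFin a i ∩ T := hpres x hxB
            have : permRestr (blockFin a i ∩ T) ρ x = ρ x := permRestr_apply_mem hpres hxB
            show (permRestr (blockFin a i ∩ T) ρ)⁻¹ (ρ x) = x
            rw [← this]
            exact Equiv.symm_apply_apply _ _
          · have hρx : ρ x = x := hfix x (by
              intro j hj
              rcases List.mem_cons.mp hj with rfl | hj'
              · exact hxB
              · exact hx j hj')
            show (permRestr (blockFin a i ∩ T) ρ)⁻¹ (ρ x) = x
            rw [hρx]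
            exact perm_fix_of_fix_inv (permRestr_apply_not_mem hpres hxB)
        · intro j hj x hx
          have hρx : ρ x ∈ blockFin a j ∩ T := hblk j (List.mem_cons_of_mem i hj) x hx
          have hρxB : ρ x ∉ blockFin a i ∩ T := fun hc => hdisj j hj _ hc hρx
          show (permRestr (blockFin a i ∩ T) ρ)⁻¹ (ρ x) ∈ _
          rw [perm_fix_of_fix_inv (permRestr_apply_not_mem hpres hρxB)]
          exact hρx
    · -- h2
      intro σ hσ τ hτ
      have hσfix : ∀ x ∉ blockFin a i ∩ T, σ x = x := (Finset.mem_filter.mp hσ).2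
      obtain ⟨hτfix, hτblk⟩ := (Finset.mem_filter.mp hτ).2
      have hσmaps := perm_maps_of_fix_outside hσfix
      have hτfixB : ∀ x ∈ blockFin a i ∩ T, τ x = x := by
        intro x hx
        exact hτfix x (fun j hj => hdisj j hj x hx)
      have hC : Pl a T (i :: l) (σ * τ) := by
        constructor
        · intro x hx
          have hτx : τ x = x := hτfix x (fun j hj => hx j (List.mem_cons_of_mem i hj))
          show σ (τ x) = x
          rw [hτx]
          exact hσfix x (hx i (List.mem_cons_self))
        · intro j hj x hx
          rcases List.mem_cons.mp hj with rfl | hj'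
          · show σ (τ x) ∈ _
            rw [hτfixB x hx]
            exact hσmaps x hx
          · have hτx : τ x ∈ blockFin a j ∩ T := hτblk j hj' x hx
            show σ (τ x) ∈ _
            rw [hσfix _ (fun hc => hdisj j hj' _ hc hτx)]
            exact hτx
      constructor
      · exact Finset.mem_filter.mpr ⟨Finset.mem_univ _, hC⟩
      · have hmaps : ∀ x ∈ blockFin a i ∩ T, (σ * τ) x ∈ blockFin a i ∩ T :=
          hC.2 i (List.mem_cons_self)
        ext x
        by_cases hx : x ∈ blockFin a i ∩ T
        · rw [permRestr_apply_mem hmaps hx]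
          simp only [Equiv.Perm.mul_apply, hτfixB x hx]
        · rw [permRestr_apply_not_mem hmaps hx, hσfix x hx]

lemma prod_symAlg_finRange (T : Finset (Fin (∑ t, a t))) :
    ((List.finRange k).map (fun i => symAlg (blockFin a i ∩ T))).prod
      = ∑ σ ∈ Finset.univ.filter (fun σ : Equiv.Perm (Fin (∑ t, a t)) =>
          (∀ x ∉ T, σ x = x) ∧
          ∀ i : Fin k, ∀ x ∈ blockFin a i ∩ T, σ x ∈ blockFin a i ∩ T),
        MonoidAlgebra.single σ (1 : ℂ) := by
  rw [list_prod_symAlg a T _ (List.nodup_finRange k)]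
  apply Finset.sum_congr _ (fun _ _ => rfl)
  apply Finset.filter_congr
  intro σ _
  unfold Pl
  constructor
  · rintro ⟨h1, h2⟩
    refine ⟨?_, fun i => h2 i (List.mem_finRange i)⟩
    intro x hx
    refine h1 x (fun j _ hc => hx (Finset.mem_inter.mp hc).2)
  · rintro ⟨h1, h2⟩
    refine ⟨?_, fun i _ => h2 i⟩
    intro x hx
    obtain ⟨i₀, hi₀⟩ := block_exists a x
    by_cases hxT : x ∈ T
    · exact absurd (Finset.mem_inter.mpr ⟨mem_blockFin_of_inBlock a hi₀, hxT⟩)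
        (hx i₀ (List.mem_finRange i₀))
    · exact h1 x hxT

/-- The condition on `ρ` selecting the terms surviving for a given `T`. -/
def Zpred (T : Finset (Fin (∑ t, a t))) (ρ : Equiv.Perm (Fin (∑ t, a t))) : Prop :=
  ∀ x ∈ T, ρ x ∈ T ∧ ∀ i, inBlock a i (x : ℕ) → inBlock a i (ρ x : ℕ)

instance (T : Finset (Fin (∑ t, a t))) : DecidablePred (Zpred a T) :=
  fun ρ => by unfold Zpred; infer_instance

lemma symAlg_mul_prod (T : Finset (Fin (∑ t, a t))) :
    symAlg Tᶜ * ((List.finRange k).map (fun i => symAlg (blockFin a i ∩ T))).prod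
      = ∑ ρ ∈ Finset.univ.filter (Zpred a T), MonoidAlgebra.single ρ (1 : ℂ) := by
  rw [prod_symAlg_finRange, symAlg]
  apply conv _ _ _ (fun ρ => ρ * (permRestr T ρ)⁻¹)
  · -- h1
    intro ρ hρ
    have hZ : Zpred a T ρ := (Finset.mem_filter.mp hρ).2
    have hpres : ∀ x ∈ T, ρ x ∈ T := fun x hx => (hZ x hx).1
    set τ := permRestr T ρ with hτ
    have hτT : ∀ x ∈ T, τ x = ρ x := fun x hx => permRestr_apply_mem hpres hx
    have hτT' : ∀ x ∉ T, τ x = x := fun x hx => permRestr_apply_not_mem hpres hx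
    constructor
    · refine Finset.mem_filter.mpr ⟨Finset.mem_univ _, ?_⟩
      intro x hx
      rw [Finset.notMem_compl] at hx
      have hy : τ⁻¹ x ∈ T := by
        by_contra hc
        have h1 : τ (τ⁻¹ x) = τ⁻¹ x := hτT' _ hc
        rw [show τ (τ⁻¹ x) = x from Equiv.apply_symm_apply _ _] at h1
        exact hc (h1 ▸ hx)
      show ρ (τ⁻¹ x) = x
      rw [← hτT _ hy]
      exact Equiv.apply_symm_apply _ _
    · have heq : (ρ * τ⁻¹)⁻¹ * ρ = τ := by group
      rw [heq]
      refine Finset.mem_filter.mpr ⟨Finset.mem_univ _, hτT', ?_⟩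
      intro i x hx
      obtain ⟨hxB, hxT⟩ := Finset.mem_inter.mp hx
      rw [hτT _ hxT]
      exact Finset.mem_inter.mpr ⟨mem_blockFin_of_inBlock a
        ((hZ x hxT).2 i (inBlock_of_mem_blockFin a hxB)), (hZ x hxT).1⟩
  · -- h2
    intro σ hσ τ hτ
    have hσfix : ∀ x ∈ T, σ x = x := by
      intro x hx
      exact (Finset.mem_filter.mp hσ).2 x (by simp [Finset.mem_compl, hx])
    obtain ⟨hτfix, hτblk⟩ := (Finset.mem_filter.mp hτ).2
    have key : ∀ x ∈ T, (σ * τ) x = τ x ∧ τ x ∈ T ∧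
        ∀ i, inBlock a i (x : ℕ) → inBlock a i ((τ x : Fin (∑ t, a t)) : ℕ) := by
      intro x hx
      obtain ⟨i₀, hi₀⟩ := block_exists a x
      have hxB : x ∈ blockFin a i₀ ∩ T :=
        Finset.mem_inter.mpr ⟨mem_blockFin_of_inBlock a hi₀, hx⟩
      have hτx := hτblk i₀ x hxB
      obtain ⟨hτxB, hτxT⟩ := Finset.mem_inter.mp hτx
      refine ⟨?_, hτxT, ?_⟩
      · show σ (τ x) = τ x
        exact hσfix _ hτxT
      · intro i hi
        rw [block_unique a hi hi₀]
        exact inBlock_of_mem_blockFin a hτxB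
    have hC : Zpred a T (σ * τ) := by
      intro x hx
      obtain ⟨h1, h2, h3⟩ := key x hx
      rw [show (σ * τ) x = τ x from h1]
      exact ⟨h2, h3⟩
    constructor
    · exact Finset.mem_filter.mpr ⟨Finset.mem_univ _, hC⟩
    · have hmaps : ∀ x ∈ T, (σ * τ) x ∈ T := fun x hx => (hC x hx).1
      have hres : permRestr T (σ * τ) = τ := by
        ext x
        by_cases hx : x ∈ T
        · rw [permRestr_apply_mem hmaps hx, (key x hx).1]
        · rw [permRestr_apply_not_mem hmaps hx, hτfix x hx]
      rw [hres]
      group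

end ProdSym
section SignSum
variable {k : ℕ} (a : Fin k → ℕ)

lemma zpred_iterate {T : Finset (Fin (∑ t, a t))} {π : Equiv.Perm (Fin (∑ t, a t))}
    (hZ : Zpred a T π) {x : Fin (∑ t, a t)} (hx : x ∈ T) (m : ℕ) :
    (π ^ m) x ∈ T ∧ ∀ i, inBlock a i (x : ℕ) → inBlock a i (((π ^ m) x : Fin (∑ t, a t)) : ℕ) := by
  induction m with
  | zero => exact ⟨by simpa using hx, fun i hi => by simpa using hi⟩
  | succ m ih =>
    have happ : (π ^ (m + 1)) x = π ((π ^ m) x) := by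
      rw [pow_succ', Equiv.Perm.mul_apply]
    rw [happ]
    obtain ⟨hyT, hyB⟩ := ih
    exact ⟨(hZ _ hyT).1, fun i hi => (hZ _ hyT).2 i (hyB i hi)⟩

lemma cycle_ne_fix {π c : Equiv.Perm (Fin (∑ t, a t))} (hc : c ∈ π.cycleFactorsFinset)
    {x : Fin (∑ t, a t)} (hx : x ∈ c.support) : π x = c x ∧ π x ≠ x := by
  obtain ⟨-, h2⟩ := Equiv.Perm.mem_cycleFactorsFinset_iff.mp hc
  have := h2 x hx
  exact ⟨this.symm, by rw [← this]; exact Equiv.Perm.mem_support.mp hx⟩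

lemma signSumAux (π : Equiv.Perm (Fin (∑ t, a t))) :
    ∑ T ∈ Finset.univ.filter (fun T => Zpred a T π), (-1 : ℂ) ^ T.card
      = (cWeight a π : ℂ) := by
  set F := Finset.univ.filter (fun x : Fin (∑ t, a t) => π x = x) with hF
  set SC := smallCycles a π with hSC
  have hSCcf : ∀ c ∈ SC, c ∈ π.cycleFactorsFinset := fun c hc => (Finset.mem_filter.mp hc).1
  have hpd : ∀ c ∈ SC, ∀ d ∈ SC, c ≠ d → Disjoint c.support d.support := by
    intro c hc d hd hne
    exact ((π.cycleFactorsFinset_pairwise_disjoint (hSCcf c hc) (hSCcf d hd)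
      hne)).disjoint_support
  -- cardinality of the union decomposition
  have hcard : ∀ U S, U ⊆ F → S ⊆ SC →
      (U ∪ S.biUnion Equiv.Perm.support).card = U.card + ∑ c ∈ S, c.support.card := by
    intro U S hU hS
    have hdisj : Disjoint U (S.biUnion Equiv.Perm.support) := by
      rw [Finset.disjoint_left]
      intro x hxU hxB
      obtain ⟨c, hcS, hxc⟩ := Finset.mem_biUnion.mp hxB
      exact (cycle_ne_fix a (hSCcf c (hS hcS)) hxc).2
        ((Finset.mem_filter.mp (hU hxU)).2)
    rw [Finset.card_union_of_disjoint hdisj, Finset.card_biUnion]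
    intro c hc d hd hne
    exact hpd c (hS hc) d (hS hd) hne
  -- the union of a pair is in the family
  have hj : ∀ U S, U ⊆ F → S ⊆ SC → Zpred a (U ∪ S.biUnion Equiv.Perm.support) π := by
    intro U S hU hS x hx
    rcases Finset.mem_union.mp hx with hxU | hxB
    · have hπx : π x = x := (Finset.mem_filter.mp (hU hxU)).2
      rw [hπx]
      exact ⟨hx, fun i hi => hi⟩
    · obtain ⟨c, hcS, hxc⟩ := Finset.mem_biUnion.mp hxB
      have hcx := (cycle_ne_fix a (hSCcf c (hS hcS)) hxc).1
      have hcxs : c x ∈ c.support := Equiv.Perm.apply_mem_support.mpr hxc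
      obtain ⟨i₀, hi₀⟩ := (Finset.mem_filter.mp (hS hcS)).2
      refine ⟨Finset.mem_union_right _ (Finset.mem_biUnion.mpr ⟨c, hcS, by rw [hcx]; exact hcxs⟩),
        ?_⟩
      intro i hi
      rw [block_unique a hi (hi₀ x hxc), hcx]
      exact hi₀ _ hcxs
  -- decomposition of a member of the family
  have hdecomp : ∀ T, Zpred a T π →
      (T ∩ F) ∪ (SC.filter (fun c => c.support ⊆ T)).biUnion Equiv.Perm.support = T := by
    intro T hZ
    apply Finset.Subset.antisymm
    · apply Finset.union_subset Finset.inter_subset_left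
      apply Finset.biUnion_subset.mpr
      intro c hc
      exact (Finset.mem_filter.mp hc).2
    · intro x hx
      by_cases hπx : π x = x
      · exact Finset.mem_union_left _ (Finset.mem_inter.mpr ⟨hx,
          Finset.mem_filter.mpr ⟨Finset.mem_univ _, hπx⟩⟩)
      · have hxs : x ∈ π.support := Equiv.Perm.mem_support.mpr hπx
        have hcCF : π.cycleOf x ∈ π.cycleFactorsFinset :=
          Equiv.Perm.cycleOf_mem_cycleFactorsFinset_iff.mpr hxs
        have hsupp : ∀ y ∈ (π.cycleOf x).support,
            y ∈ T ∧ ∀ i, inBlock a i (x : ℕ) → inBlock a i (y : ℕ) := by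
          intro y hy
          obtain ⟨hsc, -⟩ := Equiv.Perm.mem_support_cycleOf_iff.mp hy
          obtain ⟨m, -, hm⟩ := hsc.exists_pow_eq'
          rw [← hm]
          exact zpred_iterate a hZ hx m
        obtain ⟨i₀, hi₀⟩ := block_exists a x
        have hcSC : π.cycleOf x ∈ SC := Finset.mem_filter.mpr ⟨hcCF,
          ⟨i₀, fun y hy => (hsupp y hy).2 i₀ hi₀⟩⟩
        have hxsupp : x ∈ (π.cycleOf x).support :=
          Equiv.Perm.mem_support_cycleOf_iff.mpr ⟨Equiv.Perm.SameCycle.refl _ _, hxs⟩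
        exact Finset.mem_union_right _ (Finset.mem_biUnion.mpr ⟨π.cycleOf x,
          Finset.mem_filter.mpr ⟨hcSC, fun y hy => (hsupp y hy).1⟩, hxsupp⟩)
  -- the two components recover the pair
  have hright : ∀ U S, U ⊆ F → S ⊆ SC →
      (U ∪ S.biUnion Equiv.Perm.support) ∩ F = U ∧
      SC.filter (fun c => c.support ⊆ U ∪ S.biUnion Equiv.Perm.support) = S := by
    intro U S hU hS
    constructor
    · ext x
      simp only [Finset.mem_inter, Finset.mem_union, Finset.mem_biUnion]
      constructor
      · rintro ⟨hxU | ⟨c, hcS, hxc⟩, hxF⟩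
        · exact hxU
        · exact absurd ((Finset.mem_filter.mp hxF).2)
            (cycle_ne_fix a (hSCcf c (hS hcS)) hxc).2
      · intro hxU
        exact ⟨Or.inl hxU, hU hxU⟩
    · ext c
      simp only [Finset.mem_filter]
      constructor
      · rintro ⟨hcSC, hsub⟩
        have hcyc : c.IsCycle := (Equiv.Perm.mem_cycleFactorsFinset_iff.mp (hSCcf c hcSC)).1
        obtain ⟨x, hxc⟩ := hcyc.nonempty_support
        have hxU : x ∉ U := fun hc =>
          (cycle_ne_fix a (hSCcf c hcSC) hxc).2 ((Finset.mem_filter.mp (hU hc)).2)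
        rcases Finset.mem_union.mp (hsub hxc) with h | h
        · exact absurd h hxU
        · obtain ⟨c', hc'S, hxc'⟩ := Finset.mem_biUnion.mp h
          have : c = c' := by
            by_contra hne
            exact Finset.disjoint_left.mp (hpd c hcSC c' (hS hc'S) hne) hxc hxc'
          rwa [this]
      · intro hcS
        refine ⟨hS hcS, ?_⟩
        intro y hy
        exact Finset.mem_union_right _ (Finset.mem_biUnion.mpr ⟨c, hcS, hy⟩)
  -- main bijection
  have key : ∑ T ∈ Finset.univ.filter (fun T => Zpred a T π), (-1 : ℂ) ^ T.card
      = ∑ p ∈ F.powerset ×ˢ SC.powerset,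
          (-1 : ℂ) ^ (p.1.card + ∑ c ∈ p.2, c.support.card) := by
    apply Finset.sum_nbij'
      (i := fun T => (T ∩ F, SC.filter (fun c => c.support ⊆ T)))
      (j := fun p => p.1 ∪ p.2.biUnion Equiv.Perm.support)
    · intro T _
      exact Finset.mem_product.mpr ⟨Finset.mem_powerset.mpr Finset.inter_subset_right,
        Finset.mem_powerset.mpr (Finset.filter_subset _ _)⟩
    · intro p hp
      obtain ⟨h1, h2⟩ := Finset.mem_product.mp hp
      exact Finset.mem_filter.mpr ⟨Finset.mem_univ _,
        hj _ _ (Finset.mem_powerset.mp h1) (Finset.mem_powerset.mp h2)⟩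
    · intro T hT
      exact hdecomp T (Finset.mem_filter.mp hT).2
    · intro p hp
      obtain ⟨h1, h2⟩ := Finset.mem_product.mp hp
      obtain ⟨e1, e2⟩ := hright _ _ (Finset.mem_powerset.mp h1) (Finset.mem_powerset.mp h2)
      exact Prod.ext e1 e2
    · intro T hT
      have hZ := (Finset.mem_filter.mp hT).2
      have hTeq := (hdecomp T hZ).symm
      conv_lhs => rw [hTeq]
      rw [hcard _ _ Finset.inter_subset_right (Finset.filter_subset _ _)]
  rw [key, Finset.sum_product]
  simp_rw [pow_add, ← Finset.prod_pow_eq_pow_sum]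
  rw [← Finset.sum_mul_sum]
  have hsum2 : ∑ S ∈ SC.powerset, ∏ c ∈ S, (-1 : ℂ) ^ c.support.card
      = ∏ c ∈ SC, ((-1 : ℂ) ^ c.support.card + 1) := by
    rw [Finset.prod_add]
    apply Finset.sum_congr rfl
    intro S hS
    simp
  have hsum1 : ∑ U ∈ F.powerset, (-1 : ℂ) ^ U.card = if F = ∅ then 1 else 0 := by
    have h0 := Finset.prod_add (fun _ : Fin (∑ t, a t) => (-1 : ℂ)) (fun _ => 1) F
    simp only [Finset.prod_const, Finset.prod_const_one, one_pow, mul_one, neg_add_cancel] at h0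
    rw [← h0]
    rcases eq_or_ne F ∅ with h | h
    · simp [h]
    · rw [if_neg h, zero_pow]
      simpa [Finset.card_eq_zero] using h
  rw [hsum2, hsum1]
  by_cases hfix : ∃ x, π x = x
  · obtain ⟨x, hx⟩ := hfix
    have hFne : F ≠ ∅ := Finset.ne_empty_of_mem
      (Finset.mem_filter.mpr ⟨Finset.mem_univ _, hx⟩)
    rw [if_neg hFne, zero_mul, cWeight, if_pos (Or.inl ⟨x, hx⟩)]
    simp
  · have hFe : F = ∅ := by
      rw [hF, Finset.filter_eq_empty_iff]
      intro x _
      exact fun hc => hfix ⟨x, hc⟩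
    rw [if_pos hFe, one_mul]
    by_cases hodd : ∃ c ∈ smallCycles a π, Odd c.support.card
    · obtain ⟨c, hc, hco⟩ := hodd
      rw [cWeight, if_pos (Or.inr ⟨c, hc, hco⟩)]
      rw [Finset.prod_eq_zero (hSC ▸ hc : c ∈ SC)]
      · simp
      · rw [hco.neg_one_pow]
        ring
    · rw [cWeight, if_neg (by push_neg; exact ⟨fun x => fun hc => hfix ⟨x, hc⟩, by
        push_neg at hodd; exact hodd⟩)]
      push_neg at hodd
      have : ∀ c ∈ SC, (-1 : ℂ) ^ c.support.card + 1 = 2 := by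
        intro c hc
        rw [(Nat.not_odd_iff_even.mp (hodd c (hSC ▸ hc))).neg_one_pow]
        ring
      rw [Finset.prod_congr rfl this, Finset.prod_const]
      push_cast
      rw [hSC]
end SignSum
/-- In `ℂ[S_n]`,
`Q = ∑_T (-1)^{|T|} I(Sym({1,…,n}\T)) ∏ᵢ I(Sym(Aᵢ ∩ T)) = ∑_π c(π)·π`. -/
theorem group_algebra_identity (k : ℕ) (a : Fin k → ℕ) :
    ∑ T : Finset (Fin (∑ t, a t)),
      ((-1 : ℂ) ^ T.card) •
        (symAlg Tᶜ * ((List.finRange k).map (fun i => symAlg (blockFin a i ∩ T))).prod)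
    = ∑ π : Equiv.Perm (Fin (∑ t, a t)),
        (cWeight a π : ℂ) • MonoidAlgebra.single π 1 := by
  have h1 : ∀ T : Finset (Fin (∑ t, a t)),
      ((-1 : ℂ) ^ T.card) •
        (symAlg Tᶜ * ((List.finRange k).map (fun i => symAlg (blockFin a i ∩ T))).prod)
      = ∑ ρ : Equiv.Perm (Fin (∑ t, a t)),
          (if Zpred a T ρ then (-1 : ℂ) ^ T.card else 0) • MonoidAlgebra.single ρ 1 := by
    intro T
    rw [symAlg_mul_prod a T, Finset.smul_sum, Finset.sum_filter]
    apply Finset.sum_congr rfl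
    intro ρ _
    split_ifs <;> simp
  rw [Finset.sum_congr rfl (fun T _ => h1 T), Finset.sum_comm]
  apply Finset.sum_congr rfl
  intro ρ _
  rw [← Finset.sum_smul, ← Finset.sum_filter, signSumAux a ρ]
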